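/- Let A be a skeletal Reedy category. A morphism f of presheaves on A × Δ is a fibration in the injective (vertical) model structure (i.e., ⟨∂a\f⟩ is a Kan fibration for every object a of A) if and only if ⟨f/Λⁿₖ⟩ is a trivial fibration of presheaves on A for all n ≥ 1 and 0 ≤ k ≤ n, if and only if ⟨f/v⟩ is a trivial fibration for every anodyne extension v of simplicial sets. -/

import Mathlib

open CategoryTheory CategoryTheory.Limits

universe w v u

namespace Paper

variable {M : Type u} [Category.{v} M]

/-- The class of morphisms with the left lifting property with respect to every morphism in `C`. -/
def llp (C : MorphismProperty M) : MorphismProperty M :=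
  fun _ _ i => ∀ ⦃Z T : M⦄ (p : Z ⟶ T), C p → HasLiftingProperty i p

/-- The class of morphisms with the right lifting property with respect to every morphism in `C`. -/
def rlp (C : MorphismProperty M) : MorphismProperty M :=
  fun _ _ p => ∀ ⦃U V : M⦄ (i : U ⟶ V), C i → HasLiftingProperty i p

/-- Stability under retracts (in the arrow category). -/
def StableUnderRetracts (P : MorphismProperty M) : Prop :=
  ∀ ⦃X Y X' Y' : M⦄ (f : X ⟶ Y) (f' : X' ⟶ Y')
    (i : Arrow.mk f' ⟶ Arrow.mk f) (r : Arrow.mk f ⟶ Arrow.mk f'),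
      i ≫ r = 𝟙 _ → P f → P f'

/-- The restriction of a transfinite sequence to the indices below `b`. -/
def restrictionLT {β : Type w} [Preorder β] (F : β ⥤ M) (b : β) : {i : β // i < b} ⥤ M :=
  (Monotone.functor (f := fun i : {i : β // i < b} => (i : β)) fun _ _ h => h) ⋙ F

/-- The cocone over the restriction of `F` to indices `< b`, with apex `F.obj b`. -/
@[simps]
def coconeLT {β : Type w} [Preorder β] (F : β ⥤ M) (b : β) :
    Cocone (restrictionLT F b) where
  pt := F.obj b
  ι :=
    { app := fun i => F.map (homOfLE i.2.le)
      naturality := fun i j g => by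
        dsimp [restrictionLT, Monotone.functor]
        rw [Category.comp_id, ← F.map_comp]
        congr 1 }

/-- A class of morphisms is stable under transfinite composition if, for every
well-ordered continuous sequence whose successor maps lie in `P`, the canonical map from the
first object to a colimit of the sequence lies in `P`. -/
def StableUnderTransfiniteComposition (P : MorphismProperty M) : Prop :=
  ∀ (β : Type w) (_ : LinearOrder β) (_ : OrderBot β) (_ : SuccOrder β)
    (_ : WellFoundedLT β) (F : β ⥤ M),
    (∀ b : β, Order.IsSuccLimit b → Nonempty (IsColimit (coconeLT F b))) →
    (∀ b : β, ¬IsMax b → P (F.map (homOfLE (Order.le_succ b)))) →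
    ∀ (c : Cocone F), IsColimit c → P (c.ι.app ⊥)

/-- Trivial fibrations: morphisms with the right lifting property with respect to all
monomorphisms. -/
def IsTrivFib {X Y : M} (f : X ⟶ Y) : Prop :=
  ∀ ⦃U V : M⦄ (i : U ⟶ V), Mono i → HasLiftingProperty i f

end Paper

open CategoryTheory CategoryTheory.Limits Opposite

namespace Paper

variable {A : Type} [SmallCategory A] {B : Type} [SmallCategory B]

/-- The external product `X ⊠ Y` of presheaves: `(X ⊠ Y)_{a,b} = X_a × Y_b`. -/
@[simps]
def extProd (X : Aᵒᵖ ⥤ Type) (Y : Bᵒᵖ ⥤ Type) : (A × B)ᵒᵖ ⥤ Type where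
  obj ab := X.obj (op ab.unop.1) × Y.obj (op ab.unop.2)
  map f := TypeCat.ofHom (fun p => (X.map f.unop.1.op p.1, Y.map f.unop.2.op p.2))

/-- Functoriality of the external product. -/
@[simps]
def extProdMap {X X' : Aᵒᵖ ⥤ Type} {Y Y' : Bᵒᵖ ⥤ Type} (u : X ⟶ X') (v : Y ⟶ Y') :
    extProd X Y ⟶ extProd X' Y' where
  app ab := TypeCat.ofHom (fun p => (u.app _ p.1, v.app _ p.2))
  naturality ab ab' f := by
    refine ConcreteCategory.hom_ext _ _ fun p => ?_
    exact Prod.ext (FunctorToTypes.naturality u _ _) (FunctorToTypes.naturality v _ _)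

lemma extProdMap_id (X : Aᵒᵖ ⥤ Type) (Y : Bᵒᵖ ⥤ Type) :
    extProdMap (𝟙 X) (𝟙 Y) = 𝟙 (extProd X Y) := rfl

lemma extProdMap_comp {X X' X'' : Aᵒᵖ ⥤ Type} {Y Y' Y'' : Bᵒᵖ ⥤ Type}
    (u : X ⟶ X') (u' : X' ⟶ X'') (v : Y ⟶ Y') (v' : Y' ⟶ Y'') :
    extProdMap (u ≫ u') (v ≫ v') = extProdMap u v ≫ extProdMap u' v' := rfl

lemma extProdMap_comp_right (X : Aᵒᵖ ⥤ Type) {Y Y' Y'' : Bᵒᵖ ⥤ Type}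
    (v : Y ⟶ Y') (v' : Y' ⟶ Y'') :
    extProdMap (𝟙 X) (v ≫ v') = extProdMap (𝟙 X) v ≫ extProdMap (𝟙 X) v' := by
  rw [← extProdMap_comp, Category.id_comp]

lemma extProdMap_comp_left {X X' X'' : Aᵒᵖ ⥤ Type} (u : X ⟶ X') (u' : X' ⟶ X'')
    (Y : Bᵒᵖ ⥤ Type) :
    extProdMap (u ≫ u') (𝟙 Y) = extProdMap u (𝟙 Y) ≫ extProdMap u' (𝟙 Y) := by
  rw [← extProdMap_comp, Category.id_comp]

/-- The pushout-product `u ⊠' v : U ⊠ T ⊔_{U ⊠ S} V ⊠ S → V ⊠ T`. -/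
noncomputable def pushoutProduct {U V : Aᵒᵖ ⥤ Type} {S T : Bᵒᵖ ⥤ Type}
    (u : U ⟶ V) (v : S ⟶ T) :
    pushout (extProdMap (𝟙 U) v) (extProdMap u (𝟙 S)) ⟶ extProd V T :=
  pushout.desc (extProdMap u (𝟙 T)) (extProdMap (𝟙 V) v)
    (by rw [← extProdMap_comp, ← extProdMap_comp, Category.id_comp, Category.id_comp,
      Category.comp_id, Category.comp_id])

/-- `U \ X`, the presheaf on `B` with `(U\X)_b = Hom(U ⊠ b, X)`. -/
@[simps]
def bs (U : Aᵒᵖ ⥤ Type) (X : (A × B)ᵒᵖ ⥤ Type) : Bᵒᵖ ⥤ Type where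
  obj b := extProd U (yoneda.obj b.unop) ⟶ X
  map g := TypeCat.ofHom (fun φ => extProdMap (𝟙 U) (yoneda.map g.unop) ≫ φ)
  map_id b := by
    refine ConcreteCategory.hom_ext _ _ fun φ => ?_
    simp only [types_comp_apply, types_id_apply]
    dsimp
    rw [CategoryTheory.Functor.map_id, extProdMap_id, Category.id_comp]
  map_comp g h := by
    refine ConcreteCategory.hom_ext _ _ fun φ => ?_
    simp only [types_comp_apply, types_id_apply]
    dsimp
    rw [CategoryTheory.Functor.map_comp, extProdMap_comp_right, Category.assoc]

/-- `X / S`, the presheaf on `A` with `(X/S)_a = Hom(a ⊠ S, X)`. -/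
@[simps]
def sl (X : (A × B)ᵒᵖ ⥤ Type) (S : Bᵒᵖ ⥤ Type) : Aᵒᵖ ⥤ Type where
  obj a := extProd (yoneda.obj a.unop) S ⟶ X
  map g := TypeCat.ofHom (fun φ => extProdMap (yoneda.map g.unop) (𝟙 S) ≫ φ)
  map_id a := by
    refine ConcreteCategory.hom_ext _ _ fun φ => ?_
    simp only [types_comp_apply, types_id_apply]
    dsimp
    rw [CategoryTheory.Functor.map_id, extProdMap_id, Category.id_comp]
  map_comp g h := by
    refine ConcreteCategory.hom_ext _ _ fun φ => ?_
    simp only [types_comp_apply, types_id_apply]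
    dsimp
    rw [CategoryTheory.Functor.map_comp, extProdMap_comp_left, Category.assoc]

/-- Contravariant functoriality of `U \ X` in `U`. -/
@[simps]
def bsMapLeft {U V : Aᵒᵖ ⥤ Type} (u : U ⟶ V) (X : (A × B)ᵒᵖ ⥤ Type) :
    bs V X ⟶ bs U X where
  app b := TypeCat.ofHom (fun φ => extProdMap u (𝟙 _) ≫ φ)
  naturality b b' g := by
    refine ConcreteCategory.hom_ext _ _ fun (φ : extProd V (yoneda.obj b.unop) ⟶ X) => ?_
    show extProdMap u (𝟙 _) ≫ extProdMap (𝟙 V) (yoneda.map g.unop) ≫ φ =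
      extProdMap (𝟙 U) (yoneda.map g.unop) ≫ extProdMap u (𝟙 _) ≫ φ
    rw [← Category.assoc, ← Category.assoc, ← extProdMap_comp, ← extProdMap_comp,
      Category.id_comp, Category.comp_id, Category.id_comp, Category.comp_id]

/-- Covariant functoriality of `U \ X` in `X`. -/
@[simps]
def bsMapRight (U : Aᵒᵖ ⥤ Type) {X Y : (A × B)ᵒᵖ ⥤ Type} (f : X ⟶ Y) :
    bs U X ⟶ bs U Y where
  app b := TypeCat.ofHom (fun φ => φ ≫ f)
  naturality b b' g := by
    refine ConcreteCategory.hom_ext _ _ fun (φ : extProd U (yoneda.obj b.unop) ⟶ X) => ?_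
    show (extProdMap (𝟙 U) (yoneda.map g.unop) ≫ φ) ≫ f =
      extProdMap (𝟙 U) (yoneda.map g.unop) ≫ φ ≫ f
    rw [Category.assoc]

/-- Contravariant functoriality of `X / S` in `S`. -/
@[simps]
def slMapLeft {S T : Bᵒᵖ ⥤ Type} (v : S ⟶ T) (X : (A × B)ᵒᵖ ⥤ Type) :
    sl X T ⟶ sl X S where
  app a := TypeCat.ofHom (fun φ => extProdMap (𝟙 _) v ≫ φ)
  naturality a a' g := by
    refine ConcreteCategory.hom_ext _ _ fun (φ : extProd (yoneda.obj a.unop) T ⟶ X) => ?_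
    show extProdMap (𝟙 _) v ≫ extProdMap (yoneda.map g.unop) (𝟙 T) ≫ φ =
      extProdMap (yoneda.map g.unop) (𝟙 S) ≫ extProdMap (𝟙 _) v ≫ φ
    rw [← Category.assoc, ← Category.assoc, ← extProdMap_comp, ← extProdMap_comp,
      Category.id_comp, Category.comp_id, Category.id_comp, Category.comp_id]

/-- Covariant functoriality of `X / S` in `X`. -/
@[simps]
def slMapRight {X Y : (A × B)ᵒᵖ ⥤ Type} (f : X ⟶ Y) (S : Bᵒᵖ ⥤ Type) :
    sl X S ⟶ sl Y S where
  app a := TypeCat.ofHom (fun φ => φ ≫ f)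
  naturality a a' g := by
    refine ConcreteCategory.hom_ext _ _ fun (φ : extProd (yoneda.obj a.unop) S ⟶ X) => ?_
    show (extProdMap (yoneda.map g.unop) (𝟙 S) ≫ φ) ≫ f =
      extProdMap (yoneda.map g.unop) (𝟙 S) ≫ φ ≫ f
    rw [Category.assoc]

/-- The pullback-hom `⟨u \ f⟩ : V\X ⟶ V\Y ×_{U\Y} U\X`. -/
noncomputable def bsCorner {U V : Aᵒᵖ ⥤ Type} {X Y : (A × B)ᵒᵖ ⥤ Type}
    (u : U ⟶ V) (f : X ⟶ Y) :
    bs V X ⟶ pullback (bsMapLeft u Y) (bsMapRight U f) :=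
  pullback.lift (bsMapRight V f) (bsMapLeft u X) (by
    ext b (φ : extProd V (yoneda.obj b.unop) ⟶ X)
    show extProdMap u (𝟙 _) ≫ φ ≫ f = (extProdMap u (𝟙 _) ≫ φ) ≫ f
    rw [Category.assoc])

/-- The pullback-hom `⟨f / v⟩ : X/T ⟶ Y/T ×_{Y/S} X/S`. -/
noncomputable def slCorner {X Y : (A × B)ᵒᵖ ⥤ Type} {S T : Bᵒᵖ ⥤ Type}
    (f : X ⟶ Y) (v : S ⟶ T) :
    sl X T ⟶ pullback (slMapLeft v Y) (slMapRight f S) :=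
  pullback.lift (slMapRight f T) (slMapLeft v X) (by
    ext a (φ : extProd (yoneda.obj a.unop) T ⟶ X)
    show extProdMap (𝟙 _) v ≫ φ ≫ f = (extProdMap (𝟙 _) v ≫ φ) ≫ f
    rw [Category.assoc])

end Paper

namespace Paper

open CategoryTheory CategoryTheory.Limits Opposite

/-- A skeletal Reedy category structure on `A`: wide subcategories `A₊` and `A₋` of degree
raising resp. lowering morphisms, unique factorization, and the skeletality axiom (every
morphism of `A₋` admits a section, and parallel morphisms of `A₋` with the same sections are
equal). -/
structure SkeletalReedy (A : Type) [SmallCategory A] where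
  plus : MorphismProperty A
  minus : MorphismProperty A
  plus_mul : plus.IsMultiplicative
  minus_mul : minus.IsMultiplicative
  deg : A → ℕ
  plus_deg : ∀ ⦃a b : A⦄ (f : a ⟶ b), plus f → a ≠ b → deg a < deg b
  plus_endo : ∀ ⦃a : A⦄ (f : a ⟶ a), plus f → f = 𝟙 a
  minus_deg : ∀ ⦃a b : A⦄ (f : a ⟶ b), minus f → a ≠ b → deg b < deg a
  minus_endo : ∀ ⦃a : A⦄ (f : a ⟶ a), minus f → f = 𝟙 a
  fact : ∀ ⦃a b : A⦄ (f : a ⟶ b),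
    ∃ (c : A) (g : a ⟶ c) (h : c ⟶ b), minus g ∧ plus h ∧ g ≫ h = f
  fact_unique : ∀ ⦃a b : A⦄ (c c' : A) (g : a ⟶ c) (h : c ⟶ b) (g' : a ⟶ c') (h' : c' ⟶ b),
    minus g → plus h → minus g' → plus h' → g ≫ h = g' ≫ h' →
    ∃ e : c = c', g ≫ eqToHom e = g' ∧ eqToHom e ≫ h' = h
  minus_section : ∀ ⦃a b : A⦄ (f : a ⟶ b), minus f → ∃ s : b ⟶ a, s ≫ f = 𝟙 b
  minus_skeletal : ∀ ⦃a b : A⦄ (f g : a ⟶ b), minus f → minus g →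
    (∀ s : b ⟶ a, s ≫ f = 𝟙 b ↔ s ≫ g = 𝟙 b) → f = g

variable {A : Type} [SmallCategory A]

/-- The boundary `∂a` of a representable presheaf on a skeletal Reedy category: the union of
the images of all non-identity morphisms of `A₊` (equivalently, those strictly raising the
degree) with target `a`. -/
@[simps]
def bdry (R : SkeletalReedy A) (a : A) : Aᵒᵖ ⥤ Type where
  obj s := {f : s.unop ⟶ a //
    ∃ (b : A) (g : s.unop ⟶ b) (m : b ⟶ a), R.plus m ∧ R.deg b < R.deg a ∧ g ≫ m = f}
  map h := TypeCat.ofHom (fun f => ⟨h.unop ≫ f.1, by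
    obtain ⟨b, g, m, h1, h2, h3⟩ := f.2
    exact ⟨b, h.unop ≫ g, m, h1, h2, by rw [Category.assoc, h3]⟩⟩)
  map_id s := by
    refine ConcreteCategory.hom_ext _ _ fun f => ?_
    simp only [types_comp_apply, types_id_apply]
    apply Subtype.ext
    simp
  map_comp g h := by
    refine ConcreteCategory.hom_ext _ _ fun f => ?_
    simp only [types_comp_apply, types_id_apply]
    apply Subtype.ext
    simp

/-- The boundary inclusion `∂a → a`. -/
@[simps]
def bdryHom (R : SkeletalReedy A) (a : A) : bdry R a ⟶ yoneda.obj a where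
  app s := TypeCat.ofHom (fun f => f.1)
  naturality s s' h := rfl

end Paper

namespace Paper

/-- Kan fibrations: morphisms of simplicial sets with the right lifting property with
respect to the horn inclusions `Λⁿₖ → Δⁿ`, `n ≥ 1`, `0 ≤ k ≤ n`. -/
def IsKanFib {X Y : SimplexCategoryᵒᵖ ⥤ Type} (f : X ⟶ Y) : Prop :=
  ∀ (n : ℕ) (i : Fin (n + 1)), 0 < n → HasLiftingProperty ((SSet.horn n i).ι) f

/-- The class of horn inclusions `Λⁿₖ → Δⁿ`, `n ≥ 1` (up to isomorphism of arrows). -/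
def hornClass : MorphismProperty (SimplexCategoryᵒᵖ ⥤ Type) := fun _ _ g =>
  ∃ (n : ℕ) (i : Fin (n + 1)), 0 < n ∧
    Nonempty (CategoryTheory.Arrow.mk g ≅ CategoryTheory.Arrow.mk ((SSet.horn n i).ι))

/-- Anodyne extensions: the saturation `l(r(Λ))` of the set of horn inclusions. -/
def anodyne : MorphismProperty (SimplexCategoryᵒᵖ ⥤ Type) := llp (rlp hornClass)

end Paper


namespace Paper

open CategoryTheory CategoryTheory.Limits Opposite

variable {A : Type} [SmallCategory A] {B : Type} [SmallCategory B]

@[simp] lemma extProd_map_apply' {X : Aᵒᵖ ⥤ Type} {Y : Bᵒᵖ ⥤ Type} {ab ab' : (A × B)ᵒᵖ}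
    (g : ab ⟶ ab') (p : (extProd X Y).obj ab) :
    (extProd X Y).map g p = ((X.map g.unop.1.op p.1, Y.map g.unop.2.op p.2) :
      (extProd X Y).obj ab') := rfl

@[simp] lemma extProdMap_app_apply' {X X' : Aᵒᵖ ⥤ Type} {Y Y' : Bᵒᵖ ⥤ Type} (u : X ⟶ X')
    (v : Y ⟶ Y') (ab : (A × B)ᵒᵖ) (p : (extProd X Y).obj ab) :
    (extProdMap u v).app ab p = ((u.app _ p.1, v.app _ p.2) : (extProd X' Y').obj ab) := rfl

@[simp] lemma bs_map_apply' (U : Aᵒᵖ ⥤ Type) (X : (A × B)ᵒᵖ ⥤ Type) {b b' : Bᵒᵖ} (g : b ⟶ b')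
    (φ : (bs U X).obj b) :
    (bs U X).map g φ = extProdMap (𝟙 U) (yoneda.map g.unop) ≫ (φ : extProd U _ ⟶ X) := rfl

@[simp] lemma sl_map_apply' (X : (A × B)ᵒᵖ ⥤ Type) (S : Bᵒᵖ ⥤ Type) {a a' : Aᵒᵖ} (g : a ⟶ a')
    (φ : (sl X S).obj a) :
    (sl X S).map g φ = extProdMap (yoneda.map g.unop) (𝟙 S) ≫ (φ : extProd _ S ⟶ X) := rfl

@[simp] lemma bsMapLeft_app_apply' {U V : Aᵒᵖ ⥤ Type} (u : U ⟶ V) (X : (A × B)ᵒᵖ ⥤ Type)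
    (b : Bᵒᵖ) (φ : (bs V X).obj b) :
    (bsMapLeft u X).app b φ = extProdMap u (𝟙 _) ≫ (φ : extProd V _ ⟶ X) := rfl

@[simp] lemma bsMapRight_app_apply' (U : Aᵒᵖ ⥤ Type) {X Y : (A × B)ᵒᵖ ⥤ Type} (f : X ⟶ Y)
    (b : Bᵒᵖ) (φ : (bs U X).obj b) :
    (bsMapRight U f).app b φ = (φ : extProd U _ ⟶ X) ≫ f := rfl

@[simp] lemma slMapLeft_app_apply' {S T : Bᵒᵖ ⥤ Type} (v : S ⟶ T) (X : (A × B)ᵒᵖ ⥤ Type)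
    (a : Aᵒᵖ) (φ : (sl X T).obj a) :
    (slMapLeft v X).app a φ = extProdMap (𝟙 _) v ≫ (φ : extProd _ T ⟶ X) := rfl

@[simp] lemma slMapRight_app_apply' {X Y : (A × B)ᵒᵖ ⥤ Type} (f : X ⟶ Y) (S : Bᵒᵖ ⥤ Type)
    (a : Aᵒᵖ) (φ : (sl X S).obj a) :
    (slMapRight f S).app a φ = (φ : extProd _ S ⟶ X) ≫ f := rfl

section Curry

variable {U V : Aᵒᵖ ⥤ Type} {S T : Bᵒᵖ ⥤ Type} {X Y : (A × B)ᵒᵖ ⥤ Type}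

/-- Currying `Hom(V ⊠ S, X) → Hom(S, V\X)`. -/
@[simps]
def curryBS (φ : extProd V S ⟶ X) : S ⟶ bs V X where
  app b := TypeCat.ofHom (fun s =>
    { app := fun ab => TypeCat.ofHom (fun q => φ.app ab (show (extProd V S).obj ab from (q.1, S.map q.2.op s)))
      naturality := by
        intro ab ab' g
        refine ConcreteCategory.hom_ext _ _ fun q => ?_
        have := ConcreteCategory.congr_hom (φ.naturality g) (show (extProd V S).obj ab from (q.1, S.map q.2.op s))
        have e : S.map (g.unop.2 ≫ q.2).op s = S.map g.unop.2.op (S.map q.2.op s) := by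
          rw [op_comp, Functor.map_comp_apply]
        exact (congrArg (fun z : S.obj (op ab'.unop.2) =>
          φ.app ab' (show (extProd V S).obj ab' from (V.map g.unop.1.op q.1, z))) e).trans this })
  naturality b b' g := by
    refine ConcreteCategory.hom_ext _ _ fun s => ?_
    apply NatTrans.ext
    funext ab
    refine ConcreteCategory.hom_ext _ _ fun q => ?_
    have e : S.map q.2.op (S.map g s) = S.map (q.2 ≫ g.unop).op s := by
      rw [op_comp, Functor.map_comp_apply]; rfl
    exact congrArg (fun z : S.obj (op ab.unop.2) =>
      φ.app ab (show (extProd V S).obj ab from (q.1, z))) e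

/-- Uncurrying `Hom(S, V\X) → Hom(V ⊠ S, X)`. -/
@[simps]
def uncurryBS (α : S ⟶ bs V X) : extProd V S ⟶ X where
  app ab := TypeCat.ofHom (fun p => (α.app (op ab.unop.2) p.2).app ab
    (show (extProd V (yoneda.obj ab.unop.2)).obj ab from (p.1, 𝟙 ab.unop.2)))
  naturality ab ab' g := by
    refine ConcreteCategory.hom_ext _ _ fun p => ?_
    have h1 := ConcreteCategory.congr_hom (α.naturality g.unop.2.op) p.2
    have h2 := ConcreteCategory.congr_hom ((α.app (op ab.unop.2) p.2).naturality g)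
      (show (extProd V (yoneda.obj ab.unop.2)).obj ab from (p.1, 𝟙 ab.unop.2))
    have h3 := congrArg (fun ψ : (bs V X).obj (op ab'.unop.2) => (ψ : extProd V _ ⟶ X).app ab'
      (show (extProd V (yoneda.obj ab'.unop.2)).obj ab' from
        (V.map g.unop.1.op p.1, 𝟙 ab'.unop.2))) h1
    refine h3.trans (Eq.trans ?_ h2)
    exact congrArg (fun z => (α.app (op ab.unop.2) p.2 : extProd V _ ⟶ X).app ab'
      (show (extProd V (yoneda.obj ab.unop.2)).obj ab' from (V.map g.unop.1.op p.1, z)))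
      ((Category.id_comp _).trans (Category.comp_id _).symm)

lemma uncurryBS_curryBS (φ : extProd V S ⟶ X) : uncurryBS (curryBS φ) = φ := by
  ext ab p
  exact congrArg (fun z : S.obj (op ab.unop.2) =>
      φ.app ab (show (extProd V S).obj ab from (p.1, z))) (Functor.map_id_apply S _ p.2)

lemma curryBS_uncurryBS (α : S ⟶ bs V X) : curryBS (uncurryBS α) = α := by
  apply NatTrans.ext; funext b; refine ConcreteCategory.hom_ext _ _ fun s => ?_
  apply NatTrans.ext; funext ab; refine ConcreteCategory.hom_ext _ _ fun q => ?_
  have h1 := ConcreteCategory.congr_hom (α.naturality q.2.op) s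
  have h3 := congrArg (fun ψ : (bs V X).obj (op ab.unop.2) => (ψ : extProd V _ ⟶ X).app ab
      (show (extProd V (yoneda.obj ab.unop.2)).obj ab from (q.1, 𝟙 ab.unop.2))) h1
  refine h3.trans ?_
  exact congrArg (fun z => (α.app b s : extProd V _ ⟶ X).app ab
      (show (extProd V (yoneda.obj b.unop)).obj ab from (q.1, z))) (Category.id_comp _)

lemma curryBS_comp_right (φ : extProd V S ⟶ X) (f : X ⟶ Y) :
    curryBS (φ ≫ f) = curryBS φ ≫ bsMapRight V f := rfl

lemma curryBS_whisker_left (u : U ⟶ V) (φ : extProd V S ⟶ X) :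
    curryBS (extProdMap u (𝟙 S) ≫ φ) = curryBS φ ≫ bsMapLeft u X := by
  apply NatTrans.ext; funext b; refine ConcreteCategory.hom_ext _ _ fun s => ?_
  apply NatTrans.ext; funext ab; refine ConcreteCategory.hom_ext _ _ fun q => ?_
  rfl

lemma curryBS_comp_v (v : S ⟶ T) (φ : extProd V T ⟶ X) :
    v ≫ curryBS φ = curryBS (extProdMap (𝟙 V) v ≫ φ) := by
  apply NatTrans.ext; funext b; refine ConcreteCategory.hom_ext _ _ fun s => ?_
  apply NatTrans.ext; funext ab; refine ConcreteCategory.hom_ext _ _ fun q => ?_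
  exact congrArg (fun z : T.obj (op ab.unop.2) =>
      φ.app ab (show (extProd V T).obj ab from (q.1, z))) (NatTrans.naturality_apply v q.2.op s).symm

lemma uncurryBS_comp_right (α : S ⟶ bs V X) (f : X ⟶ Y) :
    uncurryBS (α ≫ bsMapRight V f) = uncurryBS α ≫ f := by
  conv_lhs => rw [← curryBS_uncurryBS α, ← curryBS_comp_right, uncurryBS_curryBS]

lemma uncurryBS_whisker_left (u : U ⟶ V) (α : S ⟶ bs V X) :
    uncurryBS (α ≫ bsMapLeft u X) = extProdMap u (𝟙 S) ≫ uncurryBS α := by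
  conv_lhs => rw [← curryBS_uncurryBS α, ← curryBS_whisker_left, uncurryBS_curryBS]

lemma uncurryBS_comp_v (v : S ⟶ T) (α : T ⟶ bs V X) :
    uncurryBS (v ≫ α) = extProdMap (𝟙 V) v ≫ uncurryBS α := by
  conv_lhs => rw [← curryBS_uncurryBS α, curryBS_comp_v, uncurryBS_curryBS]

/-- Currying `Hom(U ⊠ T, X) → Hom(U, X/T)`. -/
@[simps]
def currySL (φ : extProd U T ⟶ X) : U ⟶ sl X T where
  app a := TypeCat.ofHom (fun x =>
    { app := fun ab => TypeCat.ofHom (fun q => φ.app ab (show (extProd U T).obj ab from (U.map q.1.op x, q.2)))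
      naturality := by
        intro ab ab' g
        refine ConcreteCategory.hom_ext _ _ fun q => ?_
        have := ConcreteCategory.congr_hom (φ.naturality g) (show (extProd U T).obj ab from (U.map q.1.op x, q.2))
        have e : U.map (g.unop.1 ≫ q.1).op x = U.map g.unop.1.op (U.map q.1.op x) := by
          rw [op_comp, Functor.map_comp_apply]
        exact (congrArg (fun z : U.obj (op ab'.unop.1) =>
          φ.app ab' (show (extProd U T).obj ab' from (z, T.map g.unop.2.op q.2))) e).trans this })
  naturality a a' g := by
    refine ConcreteCategory.hom_ext _ _ fun x => ?_
    apply NatTrans.ext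
    funext ab
    refine ConcreteCategory.hom_ext _ _ fun q => ?_
    have e : U.map q.1.op (U.map g x) = U.map (q.1 ≫ g.unop).op x := by
      rw [op_comp, Functor.map_comp_apply]; rfl
    exact congrArg (fun z : U.obj (op ab.unop.1) =>
      φ.app ab (show (extProd U T).obj ab from (z, q.2))) e

/-- Uncurrying `Hom(U, X/T) → Hom(U ⊠ T, X)`. -/
@[simps]
def uncurrySL (α : U ⟶ sl X T) : extProd U T ⟶ X where
  app ab := TypeCat.ofHom (fun p => (α.app (op ab.unop.1) p.1).app ab
    (show (extProd (yoneda.obj ab.unop.1) T).obj ab from (𝟙 ab.unop.1, p.2)))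
  naturality ab ab' g := by
    refine ConcreteCategory.hom_ext _ _ fun p => ?_
    have h1 := ConcreteCategory.congr_hom (α.naturality g.unop.1.op) p.1
    have h2 := ConcreteCategory.congr_hom ((α.app (op ab.unop.1) p.1).naturality g)
      (show (extProd (yoneda.obj ab.unop.1) T).obj ab from (𝟙 ab.unop.1, p.2))
    have h3 := congrArg (fun ψ : (sl X T).obj (op ab'.unop.1) => (ψ : extProd _ T ⟶ X).app ab'
      (show (extProd (yoneda.obj ab'.unop.1) T).obj ab' from
        (𝟙 ab'.unop.1, T.map g.unop.2.op p.2))) h1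
    refine h3.trans (Eq.trans ?_ h2)
    exact congrArg (fun z => (α.app (op ab.unop.1) p.1 : extProd _ T ⟶ X).app ab'
      (show (extProd (yoneda.obj ab.unop.1) T).obj ab' from (z, T.map g.unop.2.op p.2)))
      ((Category.id_comp _).trans (Category.comp_id _).symm)

lemma uncurrySL_currySL (φ : extProd U T ⟶ X) : uncurrySL (currySL φ) = φ := by
  ext ab p
  exact congrArg (fun z : U.obj (op ab.unop.1) =>
      φ.app ab (show (extProd U T).obj ab from (z, p.2))) (Functor.map_id_apply U _ p.1)

lemma currySL_uncurrySL (α : U ⟶ sl X T) : currySL (uncurrySL α) = α := by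
  apply NatTrans.ext; funext a; refine ConcreteCategory.hom_ext _ _ fun x => ?_
  apply NatTrans.ext; funext ab; refine ConcreteCategory.hom_ext _ _ fun q => ?_
  have h1 := ConcreteCategory.congr_hom (α.naturality q.1.op) x
  have h3 := congrArg (fun ψ : (sl X T).obj (op ab.unop.1) => (ψ : extProd _ T ⟶ X).app ab
      (show (extProd (yoneda.obj ab.unop.1) T).obj ab from (𝟙 ab.unop.1, q.2))) h1
  refine h3.trans ?_
  exact congrArg (fun z => (α.app a x : extProd _ T ⟶ X).app ab
      (show (extProd (yoneda.obj a.unop) T).obj ab from (z, q.2))) (Category.id_comp _)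

lemma currySL_comp_right (φ : extProd U T ⟶ X) (f : X ⟶ Y) :
    currySL (φ ≫ f) = currySL φ ≫ slMapRight f T := rfl

lemma currySL_whisker_v (v : S ⟶ T) (φ : extProd U T ⟶ X) :
    currySL (extProdMap (𝟙 U) v ≫ φ) = currySL φ ≫ slMapLeft v X := by
  apply NatTrans.ext; funext a; refine ConcreteCategory.hom_ext _ _ fun x => ?_
  apply NatTrans.ext; funext ab; refine ConcreteCategory.hom_ext _ _ fun q => ?_
  rfl

lemma currySL_comp_u (u : U ⟶ V) (φ : extProd V T ⟶ X) :
    u ≫ currySL φ = currySL (extProdMap u (𝟙 T) ≫ φ) := by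
  apply NatTrans.ext; funext a; refine ConcreteCategory.hom_ext _ _ fun x => ?_
  apply NatTrans.ext; funext ab; refine ConcreteCategory.hom_ext _ _ fun q => ?_
  exact congrArg (fun z : V.obj (op ab.unop.1) =>
      φ.app ab (show (extProd V T).obj ab from (z, q.2))) (NatTrans.naturality_apply u q.1.op x).symm

lemma uncurrySL_comp_right (α : U ⟶ sl X T) (f : X ⟶ Y) :
    uncurrySL (α ≫ slMapRight f T) = uncurrySL α ≫ f := by
  conv_lhs => rw [← currySL_uncurrySL α, ← currySL_comp_right, uncurrySL_currySL]

lemma uncurrySL_whisker_v (v : S ⟶ T) (α : U ⟶ sl X T) :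
    uncurrySL (α ≫ slMapLeft v X) = extProdMap (𝟙 U) v ≫ uncurrySL α := by
  conv_lhs => rw [← currySL_uncurrySL α, ← currySL_whisker_v, uncurrySL_currySL]

lemma uncurrySL_comp_u (u : U ⟶ V) (α : V ⟶ sl X T) :
    uncurrySL (u ≫ α) = extProdMap u (𝟙 T) ≫ uncurrySL α := by
  conv_lhs => rw [← currySL_uncurrySL α, currySL_comp_u, uncurrySL_currySL]

end Curry

end Paper
namespace Paper

open CategoryTheory CategoryTheory.Limits Opposite

variable {A : Type} [SmallCategory A] {B : Type} [SmallCategory B]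

section Transpose

variable {U V : Aᵒᵖ ⥤ Type} {S T : Bᵒᵖ ⥤ Type} {X Y : (A × B)ᵒᵖ ⥤ Type}

/-- The common solvability condition for lifting problems against both pullback-homs. -/
def CornerLift (u : U ⟶ V) (v : S ⟶ T) (f : X ⟶ Y) : Prop :=
  ∀ (α : extProd U T ⟶ X) (β : extProd V S ⟶ X) (γ : extProd V T ⟶ Y),
    extProdMap (𝟙 U) v ≫ α = extProdMap u (𝟙 S) ≫ β →
    α ≫ f = extProdMap u (𝟙 T) ≫ γ →
    β ≫ f = extProdMap (𝟙 V) v ≫ γ →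
    ∃ l : extProd V T ⟶ X,
      extProdMap u (𝟙 T) ≫ l = α ∧ extProdMap (𝟙 V) v ≫ l = β ∧ l ≫ f = γ

lemma slCorner_fst (f : X ⟶ Y) (v : S ⟶ T) :
    slCorner f v ≫ pullback.fst _ _ = slMapRight f T :=
  pullback.lift_fst _ _ _

lemma slCorner_snd (f : X ⟶ Y) (v : S ⟶ T) :
    slCorner f v ≫ pullback.snd _ _ = slMapLeft v X :=
  pullback.lift_snd _ _ _

lemma bsCorner_fst (u : U ⟶ V) (f : X ⟶ Y) :
    bsCorner u f ≫ pullback.fst _ _ = bsMapRight V f :=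
  pullback.lift_fst _ _ _

lemma bsCorner_snd (u : U ⟶ V) (f : X ⟶ Y) :
    bsCorner u f ≫ pullback.snd _ _ = bsMapLeft u X :=
  pullback.lift_snd _ _ _

lemma hasLiftingProperty_slCorner_iff (u : U ⟶ V) (v : S ⟶ T) (f : X ⟶ Y) :
    HasLiftingProperty u (slCorner f v) ↔ CornerLift u v f := by
  constructor
  · intro hlp α β γ h1 h2 h3
    haveI := hlp
    have w : currySL γ ≫ slMapLeft v Y = currySL β ≫ slMapRight f S := by
      rw [← currySL_whisker_v, ← currySL_comp_right, h3]
    set bot : V ⟶ pullback (slMapLeft v Y) (slMapRight f S) :=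
      pullback.lift (currySL γ) (currySL β) w with hbot
    have sq : CommSq (currySL α) u (slCorner f v) bot := by
      constructor
      apply pullback.hom_ext
      · rw [Category.assoc, Category.assoc, slCorner_fst, hbot, pullback.lift_fst,
          ← currySL_comp_right, h2, ← currySL_comp_u]
      · rw [Category.assoc, Category.assoc, slCorner_snd, hbot, pullback.lift_snd,
          ← currySL_whisker_v, h1, ← currySL_comp_u]
    refine ⟨uncurrySL sq.lift, ?_, ?_, ?_⟩
    · rw [← uncurrySL_comp_u, sq.fac_left, uncurrySL_currySL]
    · have := sq.fac_right
      have hsnd : sq.lift ≫ slMapLeft v X = currySL β := by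
        rw [← slCorner_snd f v, ← Category.assoc, this, hbot, pullback.lift_snd]
      rw [← uncurrySL_whisker_v, hsnd, uncurrySL_currySL]
    · have hfst : sq.lift ≫ slMapRight f T = currySL γ := by
        rw [← slCorner_fst f v, ← Category.assoc, sq.fac_right, hbot, pullback.lift_fst]
      rw [← uncurrySL_comp_right, hfst, uncurrySL_currySL]
  · intro hc
    constructor
    intro h k sq
    have wfst : h ≫ slMapRight f T = u ≫ k ≫ pullback.fst _ _ := by
      have h' := sq.w =≫ pullback.fst _ _
      rw [Category.assoc, Category.assoc, slCorner_fst] at h'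
      exact h'
    have wsnd : h ≫ slMapLeft v X = u ≫ k ≫ pullback.snd _ _ := by
      have h' := sq.w =≫ pullback.snd _ _
      rw [Category.assoc, Category.assoc, slCorner_snd] at h'
      exact h'
    obtain ⟨l, e1, e2, e3⟩ := hc (uncurrySL h) (uncurrySL (k ≫ pullback.snd _ _))
      (uncurrySL (k ≫ pullback.fst _ _))
      (by rw [← uncurrySL_whisker_v, ← uncurrySL_comp_u, wsnd])
      (by rw [← uncurrySL_comp_right, ← uncurrySL_comp_u, wfst])
      (by rw [← uncurrySL_comp_right, ← uncurrySL_whisker_v, Category.assoc,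
          Category.assoc, pullback.condition])
    constructor
    constructor
    refine ⟨currySL l, ?_, ?_⟩
    · rw [currySL_comp_u, e1, currySL_uncurrySL]
    · apply pullback.hom_ext
      · rw [Category.assoc, slCorner_fst, ← currySL_comp_right, e3, currySL_uncurrySL]
      · rw [Category.assoc, slCorner_snd, ← currySL_whisker_v, e2, currySL_uncurrySL]

lemma hasLiftingProperty_bsCorner_iff (u : U ⟶ V) (v : S ⟶ T) (f : X ⟶ Y) :
    HasLiftingProperty v (bsCorner u f) ↔ CornerLift u v f := by
  constructor
  · intro hlp α β γ h1 h2 h3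
    haveI := hlp
    have w : curryBS γ ≫ bsMapLeft u Y = curryBS α ≫ bsMapRight U f := by
      rw [← curryBS_whisker_left, ← curryBS_comp_right, h2]
    set bot : T ⟶ pullback (bsMapLeft u Y) (bsMapRight U f) :=
      pullback.lift (curryBS γ) (curryBS α) w with hbot
    have sq : CommSq (curryBS β) v (bsCorner u f) bot := by
      constructor
      apply pullback.hom_ext
      · rw [Category.assoc, Category.assoc, bsCorner_fst, hbot, pullback.lift_fst,
          ← curryBS_comp_right, h3, curryBS_comp_v]
      · rw [Category.assoc, Category.assoc, bsCorner_snd, hbot, pullback.lift_snd,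
          ← curryBS_whisker_left, ← h1, curryBS_comp_v]
    refine ⟨uncurryBS sq.lift, ?_, ?_, ?_⟩
    · have hsnd : sq.lift ≫ bsMapLeft u X = curryBS α := by
        rw [← bsCorner_snd u f, ← Category.assoc, sq.fac_right, hbot, pullback.lift_snd]
      rw [← uncurryBS_whisker_left, hsnd, uncurryBS_curryBS]
    · rw [← uncurryBS_comp_v, sq.fac_left, uncurryBS_curryBS]
    · have hfst : sq.lift ≫ bsMapRight V f = curryBS γ := by
        rw [← bsCorner_fst u f, ← Category.assoc, sq.fac_right, hbot, pullback.lift_fst]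
      rw [← uncurryBS_comp_right, hfst, uncurryBS_curryBS]
  · intro hc
    constructor
    intro h k sq
    have wfst : h ≫ bsMapRight V f = v ≫ k ≫ pullback.fst _ _ := by
      have h' := sq.w =≫ pullback.fst _ _
      rw [Category.assoc, Category.assoc, bsCorner_fst] at h'
      exact h'
    have wsnd : h ≫ bsMapLeft u X = v ≫ k ≫ pullback.snd _ _ := by
      have h' := sq.w =≫ pullback.snd _ _
      rw [Category.assoc, Category.assoc, bsCorner_snd] at h'
      exact h'
    obtain ⟨l, e1, e2, e3⟩ := hc (uncurryBS (k ≫ pullback.snd _ _)) (uncurryBS h)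
      (uncurryBS (k ≫ pullback.fst _ _))
      (by rw [← uncurryBS_comp_v, ← uncurryBS_whisker_left, wsnd])
      (by rw [← uncurryBS_comp_right, Category.assoc, ← pullback.condition,
          ← Category.assoc, uncurryBS_whisker_left])
      (by rw [← uncurryBS_comp_right, ← uncurryBS_comp_v, wfst])
    constructor
    constructor
    refine ⟨curryBS l, ?_, ?_⟩
    · rw [curryBS_comp_v, e2, curryBS_uncurryBS]
    · apply pullback.hom_ext
      · rw [Category.assoc, bsCorner_fst, ← curryBS_comp_right, e3, curryBS_uncurryBS]
      · rw [Category.assoc, bsCorner_snd, ← curryBS_whisker_left, e1, curryBS_uncurryBS]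

end Transpose

end Paper
namespace Paper

open CategoryTheory CategoryTheory.Limits Opposite

variable {A : Type} [SmallCategory A]

/-- A partial lift for a lifting problem of `i` against `p`, with top map `t` and bottom
map `b`: a subpresheaf of the domain of `b` containing the image of `i`, together with a
compatible partial diagonal. -/
structure PartialLift {U V Z W : Aᵒᵖ ⥤ Type} (i : U ⟶ V) (p : Z ⟶ W)
    (t : U ⟶ Z) (b : V ⟶ W) where
  mem : ∀ s : Aᵒᵖ, V.obj s → Prop
  closed : ∀ ⦃s s' : Aᵒᵖ⦄ (g : s ⟶ s') ⦃y : V.obj s⦄, mem s y → mem s' (V.map g y)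
  mem_i : ∀ (s) (x : U.obj s), mem s (i.app s x)
  lift : ∀ (s) (y : V.obj s), mem s y → Z.obj s
  lift_natural : ∀ ⦃s s'⦄ (g : s ⟶ s') (y : V.obj s) (hy : mem s y),
    lift s' (V.map g y) (closed g hy) = Z.map g (lift s y hy)
  lift_i : ∀ (s) (x : U.obj s), lift s (i.app s x) (mem_i s x) = t.app s x
  lift_p : ∀ (s) (y) (hy : mem s y), p.app s (lift s y hy) = b.app s y

namespace PartialLift

variable {U V Z W : Aᵒᵖ ⥤ Type} {i : U ⟶ V} {p : Z ⟶ W} {t : U ⟶ Z} {b : V ⟶ W}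

lemma lift_congr (L : PartialLift i p t b) {s : Aᵒᵖ} {y y' : V.obj s} (e : y = y')
    (hy : L.mem s y) (hy' : L.mem s y') : L.lift s y hy = L.lift s y' hy' := by
  subst e; rfl

instance : Preorder (PartialLift i p t b) where
  le L L' := (∀ s y, L.mem s y → L'.mem s y) ∧
    ∀ s y (hy : L.mem s y) (hy' : L'.mem s y), L'.lift s y hy' = L.lift s y hy
  le_refl L := ⟨fun _ _ h => h, fun _ _ _ _ => rfl⟩
  le_trans L1 L2 L3 h12 h23 := ⟨fun s y h => h23.1 s y (h12.1 s y h),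
    fun s y hy hy' => (h23.2 s y (h12.1 s y hy) hy').trans (h12.2 s y hy _)⟩

lemma chain_bddAbove (c : Set (PartialLift i p t b)) (hc : IsChain (· ≤ ·) c)
    (hne : c.Nonempty) : BddAbove c := by
  classical
  obtain ⟨L₀, hL₀⟩ := hne
  have memU : ∀ s : Aᵒᵖ, V.obj s → Prop := fun s y => ∃ L, L ∈ c ∧ L.mem s y
  let liftU : ∀ (s) (y : V.obj s), (∃ L, L ∈ c ∧ L.mem s y) → Z.obj s := fun s y hy =>
    (Classical.choose hy).lift s y (Classical.choose_spec hy).2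
  have liftU_eq : ∀ (s) (y : V.obj s) (hy : ∃ L, L ∈ c ∧ L.mem s y)
      (L : PartialLift i p t b) (hL : L ∈ c) (hm : L.mem s y),
      liftU s y hy = L.lift s y hm := by
    intro s y hy L hL hm
    obtain ⟨hL₁, hm₁⟩ := Classical.choose_spec hy
    rcases hc.total hL₁ hL with h | h
    · exact (h.2 s y hm₁ hm).symm
    · exact h.2 s y hm hm₁
  refine ⟨⟨fun s y => ∃ L, L ∈ c ∧ L.mem s y, ?_, ?_, liftU, ?_, ?_, ?_⟩, ?_⟩
  · rintro s s' g y ⟨L, hL, hm⟩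
    exact ⟨L, hL, L.closed g hm⟩
  · intro s x
    exact ⟨L₀, hL₀, L₀.mem_i s x⟩
  · rintro s s' g y hy
    obtain ⟨L, hL, hm⟩ := id hy
    rw [liftU_eq s y hy L hL hm, liftU_eq s' (V.map g y) _ L hL (L.closed g hm),
      L.lift_natural]
  · intro s x
    rw [liftU_eq s (i.app s x) _ L₀ hL₀ (L₀.mem_i s x), L₀.lift_i]
  · rintro s y hy
    obtain ⟨L, hL, hm⟩ := id hy
    rw [liftU_eq s y hy L hL hm, L.lift_p]
  · intro L hL
    exact ⟨fun s y hm => ⟨L, hL, hm⟩, fun s y hy hy' => liftU_eq s y hy' L hL hy⟩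

/-- The minimal partial lift, defined on the image of `i`. -/
noncomputable def bot (hinj : ∀ s, Function.Injective (i.app s)) (hw : t ≫ p = i ≫ b) :
    PartialLift i p t b where
  mem s y := ∃ x, i.app s x = y
  closed s s' g y hy := ⟨U.map g (Classical.choose hy), by
    rw [FunctorToTypes.naturality, Classical.choose_spec hy]⟩
  mem_i s x := ⟨x, rfl⟩
  lift s y hy := t.app s (Classical.choose hy)
  lift_natural s s' g y hy := by
    have e : i.app s' (U.map g (Classical.choose hy)) = V.map g y := by
      rw [FunctorToTypes.naturality, Classical.choose_spec hy]
    have e' := Classical.choose_spec (⟨U.map g (Classical.choose hy), e⟩ :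
      ∃ x, i.app s' x = V.map g y)
    dsimp
    rw [hinj s' (e'.trans e.symm), FunctorToTypes.naturality]
  lift_i s x := by
    have e' := Classical.choose_spec (⟨x, rfl⟩ : ∃ x', i.app s x' = i.app s x)
    dsimp
    rw [hinj s e']
  lift_p s y hy := by
    have := ConcreteCategory.congr_hom (congr_app hw s) (Classical.choose hy)
    dsimp at this
    rw [this, Classical.choose_spec hy]

end PartialLift

end Paper
namespace Paper

open CategoryTheory CategoryTheory.Limits Opposite

variable {A : Type} [SmallCategory A]

namespace PartialLift

variable {U V Z W : Aᵒᵖ ⥤ Type} {i : U ⟶ V} {p : Z ⟶ W} {t : U ⟶ Z} {b : V ⟶ W}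

lemma exists_lt (R : SkeletalReedy A) (hp : ∀ a : A, HasLiftingProperty (bdryHom R a) p)
    (L : PartialLift i p t b) (hnt : ¬ ∀ (s : Aᵒᵖ) (y : V.obj s), L.mem s y) :
    ∃ L' : PartialLift i p t b, L ≤ L' ∧ ¬ L' ≤ L := by
  classical
  have hBad : ∃ n : ℕ, ∃ (s : Aᵒᵖ) (y : V.obj s), ¬ L.mem s y ∧ R.deg s.unop = n := by
    push_neg at hnt
    obtain ⟨s, y, hy⟩ := hnt
    exact ⟨R.deg s.unop, s, y, hy, rfl⟩
  set n := Nat.find hBad with hn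
  obtain ⟨s₀, x, hx, hdeg⟩ := Nat.find_spec hBad
  have hlow : ∀ (s : Aᵒᵖ) (y : V.obj s), R.deg s.unop < n → L.mem s y := by
    intro s y h
    by_contra hm
    exact Nat.find_min hBad h ⟨s, y, hm, rfl⟩
  set a := s₀.unop with ha
  -- `x : V.obj s₀` and `s₀ = op a` definitionally.
  have memBdry : ∀ {s : Aᵒᵖ} (h : s.unop ⟶ a),
      (∃ (b' : A) (g : s.unop ⟶ b') (m : b' ⟶ a),
        R.plus m ∧ R.deg b' < R.deg a ∧ g ≫ m = h) → L.mem s (V.map h.op x) := by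
    rintro s h ⟨b', g, m, hm, hd, hgm⟩
    have e : V.map h.op x = V.map g.op (V.map m.op x) := by
      rw [← hgm, op_comp, Functor.map_comp_apply]
    rw [e]
    exact L.closed g.op (hlow (op b') _ (by rw [hn, ← hdeg]; exact hd))
  have bdry_or_minus : ∀ {s : Aᵒᵖ} (h : s.unop ⟶ a),
      (∃ (b' : A) (g : s.unop ⟶ b') (m : b' ⟶ a),
        R.plus m ∧ R.deg b' < R.deg a ∧ g ≫ m = h) ∨ R.minus h := by
    intro s h
    obtain ⟨c, g, m, hg, hm, hgm⟩ := R.fact h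
    by_cases hc : R.deg c < R.deg a
    · exact Or.inl ⟨c, g, m, hm, hc, hgm⟩
    · have hca : c = a := by
        by_contra hne
        exact hc (R.plus_deg m hm hne)
      subst hca
      have : m = 𝟙 a := R.plus_endo m hm
      rw [this, Category.comp_id] at hgm
      exact Or.inr (hgm ▸ hg)
  have not_mem_minus : ∀ {s : Aᵒᵖ} (h : s.unop ⟶ a), R.minus h →
      ¬ L.mem s (V.map h.op x) := by
    intro s h hmin hmem
    obtain ⟨σ, hσ⟩ := R.minus_section h hmin
    have hcl : L.mem (op a) (V.map σ.op (V.map h.op x)) := L.closed σ.op hmem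
    have e : V.map σ.op (V.map h.op x) = x := by
      rw [← Functor.map_comp_apply, ← op_comp, hσ, op_id, Functor.map_id_apply]
    rw [e] at hcl
    exact hx hcl
  have eq_id_of_fix : ∀ (φ : a ⟶ a), V.map φ.op x = x → φ = 𝟙 a := by
    intro φ hφ
    obtain ⟨c, g, m, hg, hm, hgm⟩ := R.fact φ
    have hca : c = a := by
      by_contra hne
      have hd : R.deg c < R.deg a := R.minus_deg g hg (fun e => hne e.symm)
      have hy : L.mem (op c) (V.map m.op x) := hlow _ _ (by rw [hn, ← hdeg]; exact hd)
      have hcl : L.mem (op a) (V.map g.op (V.map m.op x)) := L.closed g.op hy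
      have e : V.map g.op (V.map m.op x) = x := by
        rw [← Functor.map_comp_apply, ← op_comp, hgm, hφ]
      rw [e] at hcl
      exact hx hcl
    subst hca
    have hgid : g = 𝟙 a := R.minus_endo g hg
    rw [hgid, Category.id_comp] at hgm
    rw [← hgm]
    exact R.plus_endo m hm
  have minus_unique : ∀ {s : Aᵒᵖ} (h h' : s.unop ⟶ a), R.minus h → R.minus h' →
      V.map h.op x = V.map h'.op x → h = h' := by
    intro s h h' hh hh' e
    have key : ∀ (k k' : s.unop ⟶ a), V.map k.op x = V.map k'.op x →
        ∀ (σ : a ⟶ s.unop), σ ≫ k = 𝟙 a → σ ≫ k' = 𝟙 a := by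
      intro k k' ekk σ hσ
      apply eq_id_of_fix
      rw [op_comp, Functor.map_comp_apply, ← ekk,
        ← Functor.map_comp_apply, ← op_comp, hσ, op_id, Functor.map_id_apply]
    exact R.minus_skeletal h h' hh hh'
      (fun σ => ⟨key h h' e σ, key h' h e.symm σ⟩)
  have hbd : ∀ {s : Aᵒᵖ} (c : (bdry R a).obj s), L.mem s (V.map c.1.op x) :=
    fun c => memBdry c.1 c.2
  let topB : bdry R a ⟶ Z :=
    { app := fun s => TypeCat.ofHom (fun c => L.lift s (V.map c.1.op x) (hbd c))
      naturality := by
        intro s s' g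
        refine ConcreteCategory.hom_ext _ _ fun c => ?_
        dsimp
        have e : V.map ((c.1).op ≫ g) x = V.map g (V.map (c.1).op x) :=
          Functor.map_comp_apply V (c.1).op g x
        exact (L.lift_congr e _ (L.closed g (hbd c))).trans (L.lift_natural g _ _) }
  let bottomB : yoneda.obj a ⟶ W :=
    { app := fun s => TypeCat.ofHom (fun h => b.app s (V.map h.op x))
      naturality := by
        intro s s' g
        refine ConcreteCategory.hom_ext _ _ fun h => ?_
        dsimp
        rw [Functor.map_comp_apply, FunctorToTypes.naturality] }
  have sqB : CommSq topB (bdryHom R a) p bottomB := by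
    constructor
    ext s c
    dsimp [topB, bottomB]
    rw [L.lift_p]
    rfl
  haveI := hp a
  set z := sqB.lift with hz
  have hzleft : bdryHom R a ≫ z = topB := sqB.fac_left
  have hzright : z ≫ p = bottomB := sqB.fac_right
  have z_eq : ∀ {s : Aᵒᵖ} (h : s.unop ⟶ a) (hmem : L.mem s (V.map h.op x)),
      z.app s h = L.lift s (V.map h.op x) hmem := by
    intro s h hmem
    rcases bdry_or_minus h with hb | hmin
    · have e := ConcreteCategory.congr_hom (congr_app hzleft s) ⟨h, hb⟩
      dsimp [topB] at e
      exact e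
    · exact absurd hmem (not_mem_minus h hmin)
  -- the extended partial lift
  let mem' : ∀ s : Aᵒᵖ, V.obj s → Prop :=
    fun s y => L.mem s y ∨ ∃ h : s.unop ⟶ a, V.map h.op x = y
  let lift' : ∀ (s) (y : V.obj s), mem' s y → Z.obj s := fun s y hy =>
    if hm : L.mem s y then L.lift s y hm
    else z.app s (Classical.choose (hy.resolve_left hm))
  have lift'_mem : ∀ (s) (y : V.obj s) (hy : mem' s y) (hm : L.mem s y),
      lift' s y hy = L.lift s y hm := fun s y hy hm => dif_pos hm
  have lift'_congr : ∀ (s) (y y' : V.obj s) (e : y = y') (hy : mem' s y) (hy' : mem' s y'),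
      lift' s y hy = lift' s y' hy' := by
    intro s y y' e hy hy'
    subst e; rfl
  have lift'_z : ∀ (s) (h : s.unop ⟶ a) (hy : mem' s (V.map h.op x)),
      lift' s (V.map h.op x) hy = z.app s h := by
    intro s h hy
    by_cases hm : L.mem s (V.map h.op x)
    · rw [lift'_mem _ _ hy hm, z_eq h hm]
    · rw [show lift' s (V.map h.op x) hy
          = z.app s (Classical.choose (hy.resolve_left hm)) from dif_neg hm]
      have hspec : V.map (Classical.choose (hy.resolve_left hm)).op x = V.map h.op x :=
        Classical.choose_spec (hy.resolve_left hm)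
      have hm₀ : ¬ L.mem s (V.map (Classical.choose (hy.resolve_left hm)).op x) := by
        rw [hspec]; exact hm
      have hmin : R.minus h :=
        (bdry_or_minus h).resolve_left (fun hb => hm (memBdry h hb))
      have hmin₀ : R.minus (Classical.choose (hy.resolve_left hm)) :=
        (bdry_or_minus _).resolve_left (fun hb => hm₀ (memBdry _ hb))
      rw [minus_unique _ h hmin₀ hmin hspec]
  have closed' : ∀ ⦃s s' : Aᵒᵖ⦄ (g : s ⟶ s') ⦃y : V.obj s⦄, mem' s y → mem' s' (V.map g y) := by
    intro s s' g y hy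
    rcases hy with hm | ⟨h, e⟩
    · exact Or.inl (L.closed g hm)
    · refine Or.inr ⟨g.unop ≫ h, ?_⟩
      rw [op_comp, Quiver.Hom.op_unop, Functor.map_comp_apply, e]
  have map_eq : ∀ {s s' : Aᵒᵖ} (g : s ⟶ s') (h : s.unop ⟶ a),
      V.map g (V.map h.op x) = V.map (g.unop ≫ h).op x := by
    intro s s' g h
    rw [op_comp, Quiver.Hom.op_unop, Functor.map_comp_apply]
  let L' : PartialLift i p t b :=
    { mem := mem'
      closed := closed'
      mem_i := fun s x' => Or.inl (L.mem_i s x')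
      lift := lift'
      lift_natural := by
        intro s s' g y hy
        by_cases hm : L.mem s y
        · rw [lift'_mem s y hy hm, lift'_mem s' (V.map g y) (Or.inl (L.closed g hm)) (L.closed g hm),
            L.lift_natural]
        · obtain ⟨h, e⟩ := hy.resolve_left hm
          subst e
          rw [lift'_z s h hy, lift'_congr s' _ _ (map_eq g h) (closed' g hy)
            (Or.inr ⟨g.unop ≫ h, rfl⟩), lift'_z s' (g.unop ≫ h) (Or.inr ⟨g.unop ≫ h, rfl⟩)]
          have := ConcreteCategory.congr_hom (z.naturality g) h
          dsimp at this
          rw [this]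
      lift_i := fun s x' => by
        rw [lift'_mem _ _ (Or.inl (L.mem_i s x')) (L.mem_i s x'), L.lift_i]
      lift_p := by
        intro s y hy
        by_cases hm : L.mem s y
        · rw [lift'_mem _ _ (Or.inl hm) hm, L.lift_p]
        · obtain ⟨h, e⟩ := hy.resolve_left hm
          subst e
          rw [lift'_z s h hy]
          have := ConcreteCategory.congr_hom (congr_app hzright s) h
          dsimp [bottomB] at this
          exact this }
  refine ⟨L', ⟨fun s y hm => Or.inl hm, fun s y hy hy' => lift'_mem s y hy' hy⟩, ?_⟩
  intro hle
  apply hx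
  apply hle.1
  exact Or.inr ⟨𝟙 a, by rw [op_id, Functor.map_id_apply]⟩

end PartialLift

/-- If `p` has the right lifting property with respect to all boundary inclusions of a
skeletal Reedy category, then it is a trivial fibration. -/
theorem isTrivFib_of_bdry_rlp (R : SkeletalReedy A) {Z W : Aᵒᵖ ⥤ Type} {p : Z ⟶ W}
    (hp : ∀ a : A, HasLiftingProperty (bdryHom R a) p) : IsTrivFib p := by
  intro U V i hi
  constructor
  intro t b sq
  haveI : Mono i := hi
  have hinj : ∀ s, Function.Injective (i.app s) := by
    intro s
    rw [← CategoryTheory.mono_iff_injective]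
    infer_instance
  haveI : Nonempty (PartialLift i p t b) := ⟨PartialLift.bot hinj sq.w⟩
  have hZorn := zorn_le_nonempty
    (α := PartialLift i p t b)
    (fun c hc hne => PartialLift.chain_bddAbove c hc hne)
  obtain ⟨m, hm⟩ := hZorn
  have htot : ∀ (s : Aᵒᵖ) (y : V.obj s), m.mem s y := by
    by_contra hnt
    obtain ⟨L', hle, hgt⟩ := PartialLift.exists_lt R hp m hnt
    exact hgt (hm hle)
  refine ⟨⟨⟨{ app := fun s => TypeCat.ofHom (fun y => m.lift s y (htot s y))
              naturality := by
                intro s s' g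
                refine ConcreteCategory.hom_ext _ _ fun y => ?_
                dsimp
                rw [← m.lift_natural g] }, ?_, ?_⟩⟩⟩
  · ext s x
    dsimp
    rw [m.lift_congr rfl _ (m.mem_i s x), m.lift_i]
  · ext s y
    dsimp
    rw [m.lift_p]

end Paper
open Paper CategoryTheory CategoryTheory.Limits in
/-- Let `A` be a skeletal Reedy category.  A morphism `f` of presheaves on `A × Δ` is a
fibration for the injective (vertical) model structure — i.e. `⟨∂a\f⟩` is a Kan fibration
for every object `a` of `A` — if and only if `⟨f/Λⁿₖ⟩` is a trivial fibration of presheaves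
on `A` for all `n ≥ 1` and `0 ≤ k ≤ n`, if and only if `⟨f/v⟩` is a trivial fibration for
every anodyne extension `v` of simplicial sets. -/
theorem stmt15 {A : Type} [SmallCategory A] (R : SkeletalReedy A)
    {X Y : (A × SimplexCategory)ᵒᵖ ⥤ Type} (f : X ⟶ Y) :
    ((∀ a : A, IsKanFib (bsCorner (bdryHom R a) f)) ↔
      ∀ (n : ℕ) (i : Fin (n + 1)), 0 < n →
        IsTrivFib (slCorner f ((SSet.horn n i).ι))) ∧
    ((∀ a : A, IsKanFib (bsCorner (bdryHom R a) f)) ↔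
      ∀ ⦃S T : SimplexCategoryᵒᵖ ⥤ Type⦄ (v : S ⟶ T), anodyne v →
        IsTrivFib (slCorner f v)) := by
  have key : ∀ {S T : SimplexCategoryᵒᵖ ⥤ Type} (v : S ⟶ T) {U V : Aᵒᵖ ⥤ Type} (u : U ⟶ V),
      HasLiftingProperty v (bsCorner u f) ↔ HasLiftingProperty u (slCorner f v) := by
    intro S T v U V u
    exact (hasLiftingProperty_bsCorner_iff u v f).trans
      (hasLiftingProperty_slCorner_iff u v f).symm
  have hLM : (∀ a : A, IsKanFib (bsCorner (bdryHom R a) f)) ↔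
      ∀ (n : ℕ) (i : Fin (n + 1)), 0 < n →
        IsTrivFib (slCorner f ((SSet.horn n i).ι)) := by
    constructor
    · intro hL n k hn
      apply isTrivFib_of_bdry_rlp R
      intro a
      exact (key _ _).mp (hL a n k hn)
    · intro hM a n k hn
      haveI : ∀ s, Mono ((bdryHom R a).app s) := fun s =>
        (mono_iff_injective _).2 (fun c c' h => Subtype.ext h)
      haveI : Mono (bdryHom R a) := NatTrans.mono_of_mono_app _
      exact (key _ _).mpr (hM n k hn _ inferInstance)
  have hMR : (∀ (n : ℕ) (i : Fin (n + 1)), 0 < n →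
        IsTrivFib (slCorner f ((SSet.horn n i).ι))) ↔
      ∀ ⦃S T : SimplexCategoryᵒᵖ ⥤ Type⦄ (v : S ⟶ T), anodyne v →
        IsTrivFib (slCorner f v) := by
    constructor
    · intro hM S T v hv U V u hu
      have hr : rlp hornClass (bsCorner u f) := by
        rintro S' T' g ⟨n, k, hn, ⟨e⟩⟩
        haveI : HasLiftingProperty ((SSet.horn n k).ι) (bsCorner u f) :=
          (key _ _).mpr (hM n k hn u hu)
        exact HasLiftingProperty.of_arrow_iso_left e.symm _
      exact (key v u).mp (hv _ hr)
    · intro hR n k hn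
      apply hR
      intro Z' T' p' hp'
      exact hp' _ ⟨n, k, hn, ⟨Iso.refl _⟩⟩
  exact ⟨hLM, hLM.trans hMR⟩
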